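/- Let a, b : [0,∞) → (0,1) be increasing functions with a(t) + b(t) > 1 for all t. Define A^{[t]} = [[a(t), 1 − b(t)], [1 − a(t), b(t)]]. Then for all 0 ≤ s < t, A^{[t]} is invertible and the matrix A^{[s]} (A^{[t]})^{-1} is left stochastic (nonnegative entries, each column sums to 1). -/

import Mathlib

/-- For increasing a, b : [0,∞) → (0,1) with a(t) + b(t) > 1, the matrices
A^{[t]} = [[a t, 1 − b t], [1 − a t, b t]] are invertible and
A^{[s]} (A^{[t]})⁻¹ is left stochastic for 0 ≤ s < t. -/
theorem A_family_left_stochastic (a b : ℝ → ℝ)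
    (ha : ∀ t, 0 ≤ t → a t ∈ Set.Ioo (0 : ℝ) 1)
    (hb : ∀ t, 0 ≤ t → b t ∈ Set.Ioo (0 : ℝ) 1)
    (hainc : ∀ s t, 0 ≤ s → s ≤ t → a s ≤ a t)
    (hbinc : ∀ s t, 0 ≤ s → s ≤ t → b s ≤ b t)
    (hsum : ∀ t, 0 ≤ t → 1 < a t + b t) :
    ∀ s t : ℝ, 0 ≤ s → s < t →
      IsUnit (!![a t, 1 - b t; 1 - a t, b t] : Matrix (Fin 2) (Fin 2) ℝ) ∧
      (∀ i j, 0 ≤ ((!![a s, 1 - b s; 1 - a s, b s] : Matrix (Fin 2) (Fin 2) ℝ) *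
          (!![a t, 1 - b t; 1 - a t, b t] : Matrix (Fin 2) (Fin 2) ℝ)⁻¹) i j) ∧
      (∀ j, ∑ i, ((!![a s, 1 - b s; 1 - a s, b s] : Matrix (Fin 2) (Fin 2) ℝ) *
          (!![a t, 1 - b t; 1 - a t, b t] : Matrix (Fin 2) (Fin 2) ℝ)⁻¹) i j = 1) := by
  intro s t hs hst
  have ht : (0:ℝ) ≤ t := le_of_lt (lt_of_le_of_lt hs hst)
  obtain ⟨has0, has1⟩ := ha s hs
  obtain ⟨hat0, hat1⟩ := ha t ht
  obtain ⟨hbs0, hbs1⟩ := hb s hs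
  obtain ⟨hbt0, hbt1⟩ := hb t ht
  have hss := hsum s hs
  have hst' := hsum t ht
  have hale := hainc s t hs hst.le
  have hble := hbinc s t hs hst.le
  have hdet : (!![a t, 1 - b t; 1 - a t, b t] : Matrix (Fin 2) (Fin 2) ℝ).det
      = a t + b t - 1 := by
    simp [Matrix.det_fin_two_of]; ring
  have hd : (0:ℝ) < a t + b t - 1 := by linarith
  have hunit : IsUnit (!![a t, 1 - b t; 1 - a t, b t] : Matrix (Fin 2) (Fin 2) ℝ) := by
    rw [Matrix.isUnit_iff_isUnit_det, hdet]
    exact (isUnit_iff_ne_zero).2 (ne_of_gt hd)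
  have hinv : (!![a t, 1 - b t; 1 - a t, b t] : Matrix (Fin 2) (Fin 2) ℝ)⁻¹
      = (a t + b t - 1)⁻¹ • !![b t, b t - 1; a t - 1, a t] := by
    rw [Matrix.inv_def, hdet, Matrix.adjugate_fin_two, Ring.inverse_eq_inv']
    congr 1
    norm_num [Matrix.adjugate_fin_two]
  have hprod : ∀ i j, ((!![a s, 1 - b s; 1 - a s, b s] : Matrix (Fin 2) (Fin 2) ℝ) *
      (!![a t, 1 - b t; 1 - a t, b t] : Matrix (Fin 2) (Fin 2) ℝ)⁻¹) i j
      = ((!![a s, 1 - b s; 1 - a s, b s] : Matrix (Fin 2) (Fin 2) ℝ) *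
        !![b t, b t - 1; a t - 1, a t]) i j * (a t + b t - 1)⁻¹ := by
    intro i j
    rw [hinv, Matrix.mul_smul]
    simp [Matrix.smul_apply, mul_comm]
  refine ⟨hunit, ?_, ?_⟩
  · intro i j
    rw [hprod]
    apply mul_nonneg _ (le_of_lt (inv_pos.2 hd))
    fin_cases i <;> fin_cases j <;>
      simp [Matrix.mul_apply, Fin.sum_univ_two] <;> nlinarith
  · intro j
    rw [Fin.sum_univ_two, hprod, hprod]
    fin_cases j <;>
      · simp only [Matrix.mul_apply, Fin.sum_univ_two, Matrix.cons_val_zero,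
          Matrix.cons_val_one, Matrix.head_cons, Matrix.head_fin_const,
          Matrix.of_apply, Fin.zero_eta, Fin.mk_one, Matrix.cons_val', Matrix.empty_val',
          Matrix.cons_val_fin_one]
        field_simp
        ring
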